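/- arXiv:2008.02710 — 7 statements merged into one kernel-verified Lean document; each statement's English description precedes it below -/
import Mathlib

section
/- For all t ≥ 2, the cash vector satisfies C_t = -M_0 (I - P) ∏_{k=1}^{t-1} P(G_k), where P(G_k) = I - I(G_k)(I - P). -/
open Finset Matrix

/-- Cash formula: `C_t = -M_0 (I-P) ∏_{k=1}^{t-1} P(G_k)` for `t ≥ 2`,
where `P(G) = I - I(G)(I-P)` and `I(G)` is the diagonal indicator of `G`. -/
theorem stmt2 {N : ℕ} (P : Matrix (Fin N) (Fin N) ℝ)
    (G : ℕ → Finset (Fin N))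
    (M0 : Fin N → ℝ)
    (C M : ℕ → Fin N → ℝ)
    (hC1 : C 1 = -(M0 ᵥ* (1 - P)))
    (hM : ∀ t ≥ 1, M t =
      (C t) ᵥ* (Matrix.diagonal fun i => if i ∈ G t then (1 : ℝ) else 0))
    (hC : ∀ t ≥ 1, C (t + 1) = C t - (M t) ᵥ* (1 - P)) :
    ∀ t ≥ 2, C t =
      -(M0 ᵥ* ((1 - P) *
        ((List.range (t - 1)).map (fun k =>
          (1 : Matrix (Fin N) (Fin N) ℝ) -
            (Matrix.diagonal fun i => if i ∈ G (k + 1) then (1 : ℝ) else 0) * (1 - P))).prod)) := by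
  have aux : ∀ n : ℕ, C (n + 1) =
      -(M0 ᵥ* ((1 - P) *
        ((List.range n).map (fun k =>
          (1 : Matrix (Fin N) (Fin N) ℝ) -
            (Matrix.diagonal fun i => if i ∈ G (k + 1) then (1 : ℝ) else 0) * (1 - P))).prod)) := by
    intro n
    induction n with
    | zero => simpa using hC1
    | succ n ih =>
      have h1 : C (n + 1 + 1) = C (n + 1) - (M (n + 1)) ᵥ* (1 - P) :=
        hC (n + 1) (Nat.le_add_left 1 n)
      have h2 : M (n + 1) = (C (n + 1)) ᵥ*
          (Matrix.diagonal fun i => if i ∈ G (n + 1) then (1 : ℝ) else 0) :=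
        hM (n + 1) (Nat.le_add_left 1 n)
      rw [h1, h2, ih]
      rw [List.range_succ, List.map_append, List.prod_append]
      simp only [List.map_cons, List.map_nil, List.prod_cons, List.prod_nil, mul_one]
      rw [← Matrix.mul_assoc]
      set A := (1 - P) *
        ((List.range n).map (fun k =>
          (1 : Matrix (Fin N) (Fin N) ℝ) -
            (Matrix.diagonal fun i => if i ∈ G (k + 1) then (1 : ℝ) else 0) * (1 - P))).prod
      simp only [Matrix.mul_sub, Matrix.mul_one, Matrix.vecMul_sub, Matrix.vecMul_one,
        Matrix.vecMul_vecMul, Matrix.neg_vecMul, Matrix.mul_assoc, neg_sub, neg_neg,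
        sub_neg_eq_add]
      abel
  intro t ht
  obtain ⟨n, rfl⟩ : ∃ n, t = n + 1 := ⟨t - 1, by omega⟩
  simpa using aux n
end

section
/- If μ and ν are probability vectors on [N] and P is a stochastic matrix, then ‖(μ - ν) P‖₁ ≤ δ(P) ‖μ - ν‖₁, where δ(P) = 1 - min_{i,i′} ∑_j min(p_{ij}, p_{i′j}) is the Dobrushin ergodicity coefficient. -/
open Finset Matrix

/-- Dobrushin contraction: `‖(μ - ν) P‖₁ ≤ δ(P) ‖μ - ν‖₁` where
`δ(P) = 1 - min_{i,i'} ∑_j min(p_{ij}, p_{i'j})`. -/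
theorem stmt7 {N : ℕ} (hN : 0 < N) (P : Matrix (Fin N) (Fin N) ℝ)
    (hP1 : ∀ i j, 0 ≤ P i j) (hP2 : ∀ i, ∑ j, P i j = 1)
    (μ ν : Fin N → ℝ)
    (hμ : (∀ i, 0 ≤ μ i) ∧ ∑ i, μ i = 1)
    (hν : (∀ i, 0 ≤ ν i) ∧ ∑ i, ν i = 1) :
    ∑ j, |((μ - ν) ᵥ* P) j| ≤
      (1 - ⨅ p : Fin N × Fin N, ∑ j, min (P p.1 j) (P p.2 j)) * ∑ i, |μ i - ν i| := by
  haveI : Nonempty (Fin N) := ⟨⟨0, hN⟩⟩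
  set x : Fin N → ℝ := fun i => μ i - ν i with hxdef
  set a : Fin N → ℝ := fun i => max (x i) 0 with hadef
  set b : Fin N → ℝ := fun i => max (-x i) 0 with hbdef
  have ha0 : ∀ i, 0 ≤ a i := fun i => le_max_right _ _
  have hb0 : ∀ i, 0 ≤ b i := fun i => le_max_right _ _
  have hab : ∀ i, x i = a i - b i := by
    intro i
    rcases le_total (x i) 0 with h | h
    · simp [hadef, hbdef, max_eq_right h, max_eq_left (neg_nonneg.mpr h)]
    · simp [hadef, hbdef, max_eq_left h, max_eq_right (neg_nonpos.mpr h)]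
  have habs : ∀ i, |x i| = a i + b i := by
    intro i
    rcases le_total (x i) 0 with h | h
    · simp [hadef, hbdef, max_eq_right h, max_eq_left (neg_nonneg.mpr h), abs_of_nonpos h]
    · simp [hadef, hbdef, max_eq_left h, max_eq_right (neg_nonpos.mpr h), abs_of_nonneg h]
  have hxsum : ∑ i, x i = 0 := by
    simp [hxdef, Finset.sum_sub_distrib, hμ.2, hν.2]
  set S : ℝ := ∑ i, a i with hSdef
  have hS0 : 0 ≤ S := Finset.sum_nonneg fun i _ => ha0 i
  have hSb : ∑ i, b i = S := by
    have := hxsum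
    simp only [hab] at this
    rw [Finset.sum_sub_distrib] at this
    linarith
  set δ : ℝ := ⨅ p : Fin N × Fin N, ∑ j, min (P p.1 j) (P p.2 j) with hδdef
  have hbdd : BddBelow (Set.range fun p : Fin N × Fin N => ∑ j, min (P p.1 j) (P p.2 j)) :=
    (Set.finite_range _).bddBelow
  have hδle : ∀ i i', δ ≤ ∑ j, min (P i j) (P i' j) := fun i i' => ciInf_le hbdd (i, i')
  -- the L¹ distance between rows
  have hrow : ∀ i i', ∑ j, |P i j - P i' j| ≤ 2 * (1 - δ) := by
    intro i i'
    have h1 : ∀ j, |P i j - P i' j| = P i j + P i' j - 2 * min (P i j) (P i' j) := by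
      intro j
      rcases le_total (P i j) (P i' j) with h | h
      · rw [min_eq_left h, abs_of_nonpos (by linarith)]; ring
      · rw [min_eq_right h, abs_of_nonneg (by linarith)]; ring
    calc ∑ j, |P i j - P i' j|
        = ∑ j, (P i j + P i' j - 2 * min (P i j) (P i' j)) :=
          Finset.sum_congr rfl fun j _ => h1 j
      _ = 2 - 2 * ∑ j, min (P i j) (P i' j) := by
          rw [Finset.sum_sub_distrib, Finset.sum_add_distrib, hP2, hP2, Finset.mul_sum]; ring
      _ ≤ 2 * (1 - δ) := by have := hδle i i'; nlinarith
  -- goal rewritten with x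
  have hgoal1 : ∀ j, ((μ - ν) ᵥ* P) j = ∑ i, x i * P i j := by
    intro j; simp [vecMul, dotProduct, hxdef]
  have hsumabs : ∑ i, |μ i - ν i| = 2 * S := by
    calc ∑ i, |μ i - ν i| = ∑ i, (a i + b i) := Finset.sum_congr rfl fun i _ => habs i
      _ = 2 * S := by rw [Finset.sum_add_distrib, hSb]; ring
  -- key expansion
  have hexp : ∀ j, S * (∑ i, x i * P i j) = ∑ i, ∑ i', a i * b i' * (P i j - P i' j) := by
    intro j
    have : ∑ i, ∑ i', a i * b i' * (P i j - P i' j)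
        = (∑ i, a i * P i j) * (∑ i', b i') - (∑ i, a i) * (∑ i', b i' * P i' j) := by
      rw [Finset.sum_mul_sum, Finset.sum_mul_sum, ← Finset.sum_sub_distrib]
      apply Finset.sum_congr rfl
      intro i _
      rw [← Finset.sum_sub_distrib]
      exact Finset.sum_congr rfl fun i' _ => by ring
    rw [this, hSb, ← hSdef]
    have : ∑ i, x i * P i j = ∑ i, (a i * P i j - b i * P i j) :=
      Finset.sum_congr rfl fun i _ => by rw [hab i]; ring
    rw [this, Finset.sum_sub_distrib]
    ring
  -- main inequality
  have hmain : S * ∑ j, |∑ i, x i * P i j| ≤ 2 * (1 - δ) * (S * S) := by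
    calc S * ∑ j, |∑ i, x i * P i j|
        = ∑ j, |S * (∑ i, x i * P i j)| := by
          rw [Finset.mul_sum]
          exact Finset.sum_congr rfl fun j _ => by rw [abs_mul, abs_of_nonneg hS0]
      _ ≤ ∑ j, ∑ i, ∑ i', a i * b i' * |P i j - P i' j| := by
          apply Finset.sum_le_sum
          intro j _
          rw [hexp j]
          calc |∑ i, ∑ i', a i * b i' * (P i j - P i' j)|
              ≤ ∑ i, |∑ i', a i * b i' * (P i j - P i' j)| := Finset.abs_sum_le_sum_abs _ _
            _ ≤ ∑ i, ∑ i', a i * b i' * |P i j - P i' j| := by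
                apply Finset.sum_le_sum
                intro i _
                calc |∑ i', a i * b i' * (P i j - P i' j)|
                    ≤ ∑ i', |a i * b i' * (P i j - P i' j)| := Finset.abs_sum_le_sum_abs _ _
                  _ = ∑ i', a i * b i' * |P i j - P i' j| := by
                      apply Finset.sum_congr rfl
                      intro i' _
                      rw [abs_mul, abs_of_nonneg (mul_nonneg (ha0 i) (hb0 i'))]
      _ = ∑ i, ∑ i', a i * b i' * ∑ j, |P i j - P i' j| := by
          rw [Finset.sum_comm]
          apply Finset.sum_congr rfl
          intro i _
          rw [Finset.sum_comm]
          exact Finset.sum_congr rfl fun i' _ => by rw [Finset.mul_sum]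
      _ ≤ ∑ i, ∑ i', a i * b i' * (2 * (1 - δ)) := by
          apply Finset.sum_le_sum
          intro i _
          apply Finset.sum_le_sum
          intro i' _
          exact mul_le_mul_of_nonneg_left (hrow i i') (mul_nonneg (ha0 i) (hb0 i'))
      _ = 2 * (1 - δ) * (S * S) := by
          simp only [← Finset.sum_mul, ← Finset.mul_sum]
          rw [hSb, ← hSdef]; ring
  have hgoal2 : ∑ j, |((μ - ν) ᵥ* P) j| = ∑ j, |∑ i, x i * P i j| :=
    Finset.sum_congr rfl fun j _ => by rw [hgoal1 j]
  rw [hgoal2, hsumabs]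
  rcases eq_or_lt_of_le hS0 with hS | hS
  · -- S = 0 : then a = b = 0 and x = 0
    have ha : ∀ i, a i = 0 := by
      intro i
      have := (Finset.sum_eq_zero_iff_of_nonneg (fun i _ => ha0 i)).mp hS.symm
      exact this i (Finset.mem_univ i)
    have hb : ∀ i, b i = 0 := by
      intro i
      have h0 : ∑ i, b i = 0 := by rw [hSb, ← hS]
      exact (Finset.sum_eq_zero_iff_of_nonneg (fun i _ => hb0 i)).mp h0 i (Finset.mem_univ i)
    have hx0 : ∀ i, x i = 0 := fun i => by rw [hab i, ha i, hb i]; ring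
    have : ∑ j, |∑ i, x i * P i j| = 0 := by
      apply Finset.sum_eq_zero
      intro j _
      rw [abs_eq_zero]
      exact Finset.sum_eq_zero fun i _ => by rw [hx0 i]; ring
    rw [this, ← hS]
    simp
  · -- S > 0 : divide the main inequality by S
    have := hmain
    have h2 : ∑ j, |∑ i, x i * P i j| ≤ 2 * (1 - δ) * S := by
      rw [← mul_le_mul_iff_right₀ hS]
      nlinarith
    linarith
end

section
/- In the mean-field two-block SBM, if at every step green light is given to all of block 1, then ‖C_{t+1}‖₁ = (pK/(pK+q)) ‖C_t‖₁, assuming the cash vector is block-constant at each step. -/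
/-- Two-block mean-field SBM: green light to block 1 contracts the ℓ¹ cash norm
by exactly `pK/(pK+q)`. -/
theorem stmt11 (K n p q c1 c2 c1' c2' : ℝ)
    (hK : 1 ≤ K) (hn : 0 < n) (hq : 0 < q) (hpq : q < p)
    (hbal : K * n * c1 + n * c2 = 0)
    (h1 : c1' = c1 * (p * K / (p * K + q)))
    (h2 : c2' = c2 + c1 * (q * K / (p * K + q))) :
    K * n * |c1'| + n * |c2'| = (p * K / (p * K + q)) * (K * n * |c1| + n * |c2|) := by
  have hp : 0 < p := hq.trans hpq
  have hK0 : 0 < K := lt_of_lt_of_le one_pos hK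
  have hden : 0 < p * K + q := by positivity
  have hr : 0 ≤ p * K / (p * K + q) := by positivity
  have h0 : n * (K * c1 + c2) = 0 := by linear_combination hbal
  have hc2 : c2 = -(K * c1) := by
    have := (mul_eq_zero.mp h0).resolve_left hn.ne'
    linarith
  subst h1 h2 hc2
  have e1 : |c1 * (p * K / (p * K + q))| = |c1| * (p * K / (p * K + q)) := by
    rw [abs_mul, abs_of_nonneg hr]
  have e2 : -(K * c1) + c1 * (q * K / (p * K + q))
      = -(K * (c1 * (p * K / (p * K + q)))) := by
    field_simp
    ring
  rw [e1, e2, abs_neg, abs_mul, abs_of_pos hK0, abs_mul, abs_of_nonneg hr,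
    abs_neg, abs_mul, abs_of_pos hK0]
  ring
end

section
/- In the mean-field two-block SBM, if at every step green light is given to all of block 2 (the smaller block), then ‖C_{t+1}‖₁ = (p/(qK+p)) ‖C_t‖₁; consequently, for K > 1 this contraction factor is strictly smaller than the factor pK/(pK+q) obtained when block 1 receives green light. -/
/-- Two-block mean-field SBM: green light to block 2 (the smaller block) contracts
the ℓ¹ cash norm by exactly `p/(qK+p)`, which for `K > 1` is strictly smaller than
the factor `pK/(pK+q)` obtained when block 1 receives green light. -/
theorem stmt12 (K n p q c1 c2 c1' c2' : ℝ)
    (hK : 1 ≤ K) (hn : 0 < n) (hq : 0 < q) (hpq : q < p)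
    (hbal : K * n * c1 + n * c2 = 0)
    (h2 : c2' = c2 * (p / (q * K + p)))
    (h1 : c1' = c1 + c2 * (q / (q * K + p))) :
    K * n * |c1'| + n * |c2'| = (p / (q * K + p)) * (K * n * |c1| + n * |c2|) ∧
      (1 < K → p / (q * K + p) < p * K / (p * K + q)) := by
  have hK0 : (0:ℝ) < K := lt_of_lt_of_le one_pos hK
  have hp : 0 < p := hq.trans hpq
  have hd : 0 < q * K + p := by positivity
  have hsum : K * c1 + c2 = 0 := by
    have h' : n * (K * c1 + c2) = 0 := by linear_combination hbal
    rcases mul_eq_zero.mp h' with h | h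
    · exact absurd h hn.ne'
    · exact h
  have hc1 : c1 = -(c2 / K) := by
    field_simp
    linarith
  have hc1' : c1' = -(c2 * (p / (K * (q * K + p)))) := by
    rw [h1, hc1]; field_simp; ring
  have a1 : |c1'| = |c2| * (p / (K * (q * K + p))) := by
    rw [hc1', abs_neg, abs_mul, abs_of_pos (by positivity : (0:ℝ) < p / (K * (q * K + p)))]
  have a2 : |c2'| = |c2| * (p / (q * K + p)) := by
    rw [h2, abs_mul, abs_of_pos (by positivity : (0:ℝ) < p / (q * K + p))]
  have a0 : |c1| = |c2| / K := by
    rw [hc1, abs_neg, abs_div, abs_of_pos hK0]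
  constructor
  · rw [a0, a1, a2]
    field_simp
  · intro hK1
    rw [div_lt_div_iff₀ hd (by positivity)]
    nlinarith [mul_pos hp hq, sq_nonneg (K - 1)]
end

section
/- The second largest eigenvalue of the transition matrix of the mean-field two-block SBM equals λ₂ = (p² - q²)K / ((pK + q)(qK + p)). -/
open Matrix

def blkM (m k : ℕ) (a b c d : ℝ) : Matrix (Fin m ⊕ Fin k) (Fin m ⊕ Fin k) ℝ :=
  Matrix.of (fun i j =>
    Sum.elim (fun _ => Sum.elim (fun _ => a) (fun _ => b) j)
             (fun _ => Sum.elim (fun _ => c) (fun _ => d) j) i)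

lemma blkM_mulVec {m k : ℕ} (a b c d : ℝ) (u : (Fin m ⊕ Fin k) → ℝ) (i : Fin m ⊕ Fin k) :
    (blkM m k a b c d).mulVec u i =
    Sum.elim (fun _ => a * ∑ j, u (Sum.inl j) + b * ∑ j, u (Sum.inr j))
             (fun _ => c * ∑ j, u (Sum.inl j) + d * ∑ j, u (Sum.inr j)) i := by
  cases i <;>
    simp [blkM, Matrix.mulVec, dotProduct, Fintype.sum_sum_type, Finset.mul_sum]

lemma mem_spectrum_iff' {N : Type*} [Fintype N] [DecidableEq N] (M : Matrix N N ℝ) (r : ℝ) :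
    r ∈ spectrum ℝ M ↔ ∃ v, v ≠ 0 ∧ M.mulVec v = r • v := by
  rw [spectrum.mem_iff, Matrix.isUnit_iff_isUnit_det, isUnit_iff_ne_zero, not_ne_iff,
      ← Matrix.exists_mulVec_eq_zero_iff]
  constructor
  · rintro ⟨v, hv, h⟩
    refine ⟨v, hv, ?_⟩
    rw [sub_mulVec, Algebra.algebraMap_eq_smul_one, smul_mulVec, one_mulVec,
        sub_eq_zero] at h
    exact h.symm
  · rintro ⟨v, hv, h⟩
    exact ⟨v, hv, by
      rw [sub_mulVec, Algebra.algebraMap_eq_smul_one, smul_mulVec, one_mulVec, h,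
        sub_self]⟩

/-- The second largest eigenvalue of the two-block mean-field SBM transition matrix
equals `λ₂ = (p² - q²) K / ((pK + q)(qK + p))`: `λ₂` is an eigenvalue, and every
eigenvalue other than `1` is at most `λ₂`. -/
theorem stmt13 (K n : ℕ) (hK : 1 ≤ K) (hn : 1 ≤ n)
    (p q : ℝ) (hq : 0 < q) (hpq : q < p) :
    ((p ^ 2 - q ^ 2) * (K : ℝ) / ((p * K + q) * (q * K + p))) ∈
      spectrum ℝ (Matrix.of (fun i j =>
        match i, j with
        | Sum.inl _, Sum.inl _ => p / (p * ((K : ℝ) * n) + q * n)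
        | Sum.inl _, Sum.inr _ => q / (p * ((K : ℝ) * n) + q * n)
        | Sum.inr _, Sum.inl _ => q / (q * ((K : ℝ) * n) + p * n)
        | Sum.inr _, Sum.inr _ => p / (q * ((K : ℝ) * n) + p * n) :
        Matrix (Fin (K * n) ⊕ Fin n) (Fin (K * n) ⊕ Fin n) ℝ)) ∧
    ∀ lam ∈ spectrum ℝ (Matrix.of (fun i j =>
        match i, j with
        | Sum.inl _, Sum.inl _ => p / (p * ((K : ℝ) * n) + q * n)
        | Sum.inl _, Sum.inr _ => q / (p * ((K : ℝ) * n) + q * n)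
        | Sum.inr _, Sum.inl _ => q / (q * ((K : ℝ) * n) + p * n)
        | Sum.inr _, Sum.inr _ => p / (q * ((K : ℝ) * n) + p * n) :
        Matrix (Fin (K * n) ⊕ Fin n) (Fin (K * n) ⊕ Fin n) ℝ)),
      lam ≠ 1 → lam ≤ (p ^ 2 - q ^ 2) * (K : ℝ) / ((p * K + q) * (q * K + p)) := by
  have hp : 0 < p := hq.trans hpq
  have hK0 : (0:ℝ) < K := by exact_mod_cast hK
  have hn0 : (0:ℝ) < n := by exact_mod_cast hn
  have hPK : (0:ℝ) < p * K + q := by positivity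
  have hQK : (0:ℝ) < q * K + p := by positivity
  have hD : (0:ℝ) < (p * K + q) * (q * K + p) := mul_pos hPK hQK
  have hD1 : p * ((K:ℝ) * n) + q * n ≠ 0 := by positivity
  have hD2 : q * ((K:ℝ) * n) + p * n ≠ 0 := by positivity
  set lam2 : ℝ := (p ^ 2 - q ^ 2) * (K : ℝ) / ((p * K + q) * (q * K + p)) with hlam2
  have hlam2pos : 0 < lam2 := by
    apply div_pos _ hD
    have : q ^ 2 < p ^ 2 := by nlinarith
    nlinarith
  have hMeq : (Matrix.of (fun i j =>
        match i, j with
        | Sum.inl _, Sum.inl _ => p / (p * ((K : ℝ) * n) + q * n)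
        | Sum.inl _, Sum.inr _ => q / (p * ((K : ℝ) * n) + q * n)
        | Sum.inr _, Sum.inl _ => q / (q * ((K : ℝ) * n) + p * n)
        | Sum.inr _, Sum.inr _ => p / (q * ((K : ℝ) * n) + p * n) :
        Matrix (Fin (K * n) ⊕ Fin n) (Fin (K * n) ⊕ Fin n) ℝ)) =
      blkM (K * n) n (p / (p * ((K:ℝ) * n) + q * n)) (q / (p * ((K:ℝ) * n) + q * n))
        (q / (q * ((K:ℝ) * n) + p * n)) (p / (q * ((K:ℝ) * n) + p * n)) := by
    funext i j
    cases i <;> cases j <;> rfl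
  rw [hMeq]
  set a : ℝ := p / (p * ((K:ℝ) * n) + q * n)
  set b : ℝ := q / (p * ((K:ℝ) * n) + q * n)
  set c : ℝ := q / (q * ((K:ℝ) * n) + p * n)
  set d : ℝ := p / (q * ((K:ℝ) * n) + p * n)
  have hKn : 0 < K * n := Nat.mul_pos hK hn
  have i0 : Fin (K * n) := ⟨0, hKn⟩
  have j0 : Fin n := ⟨0, hn⟩
  constructor
  · rw [mem_spectrum_iff']
    refine ⟨Sum.elim (fun _ => q * (q * K + p)) (fun _ => -(q * K * (p * K + q))), ?_, ?_⟩
    · intro h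
      have h0 := congrFun h (Sum.inl i0)
      simp only [Sum.elim_inl, Pi.zero_apply] at h0
      nlinarith
    · funext i
      rw [blkM_mulVec]
      simp only [Sum.elim_inl, Sum.elim_inr, Finset.sum_const, Finset.card_univ,
        Fintype.card_fin, nsmul_eq_mul, Nat.cast_mul, Pi.smul_apply, smul_eq_mul]
      cases i <;>
        simp only [Sum.elim_inl, Sum.elim_inr, a, b, c, d, hlam2] <;>
        field_simp <;>
        ring_nf
  · intro lam hlam hne
    rw [mem_spectrum_iff'] at hlam
    obtain ⟨v, hv0, hAv⟩ := hlam
    set S1 : ℝ := ∑ j, v (Sum.inl j) with hS1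
    set S2 : ℝ := ∑ j, v (Sum.inr j) with hS2
    have h1 : ∀ i, lam * v (Sum.inl i) = a * S1 + b * S2 := by
      intro i
      have h := congrFun hAv (Sum.inl i)
      rw [blkM_mulVec] at h
      simpa using h.symm
    have h2 : ∀ i, lam * v (Sum.inr i) = c * S1 + d * S2 := by
      intro i
      have h := congrFun hAv (Sum.inr i)
      rw [blkM_mulVec] at h
      simpa using h.symm
    by_cases h0 : lam = 0
    · rw [h0]; exact le_of_lt hlam2pos
    · set x : ℝ := v (Sum.inl i0) with hxdef
      set y : ℝ := v (Sum.inr j0) with hydef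
      have hx : ∀ i, v (Sum.inl i) = x :=
        fun i => mul_left_cancel₀ h0 ((h1 i).trans (h1 i0).symm)
      have hy : ∀ i, v (Sum.inr i) = y :=
        fun i => mul_left_cancel₀ h0 ((h2 i).trans (h2 j0).symm)
      have hS1x : S1 = (K:ℝ) * n * x := by
        rw [hS1]
        simp only [hx, Finset.sum_const, Finset.card_univ, Fintype.card_fin, nsmul_eq_mul,
          Nat.cast_mul]
      have hS2y : S2 = (n:ℝ) * y := by
        rw [hS2]
        simp only [hy, Finset.sum_const, Finset.card_univ, Fintype.card_fin, nsmul_eq_mul]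
      have e1 := h1 i0
      have e2 := h2 j0
      rw [hS1x, hS2y, ← hxdef] at e1
      rw [hS1x, hS2y, ← hydef] at e2
      have A1 : lam * ((p * K + q) * x) = p * K * x + q * y := by
        apply mul_left_cancel₀ (ne_of_gt hn0)
        have h := e1
        simp only [a, b, div_mul_eq_mul_div, ← add_div] at h
        rw [eq_div_iff hD1] at h
        linear_combination h
      have A2 : lam * ((q * K + p) * y) = q * K * x + p * y := by
        apply mul_left_cancel₀ (ne_of_gt hn0)
        have h := e2
        simp only [c, d, div_mul_eq_mul_div, ← add_div] at h
        rw [eq_div_iff hD2] at h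
        linear_combination h
      have hxy : x ≠ 0 ∧ y ≠ 0 := by
        have hex : x ≠ 0 ∨ y ≠ 0 := by
          by_contra hc
          push_neg at hc
          apply hv0
          funext i
          cases i with
          | inl i => simp [hx i, hc.1]
          | inr i => simp [hy i, hc.2]
        have hqK : q * (K:ℝ) ≠ 0 := by positivity
        rcases hex with hx0 | hy0
        · refine ⟨hx0, fun hy0 => hx0 ?_⟩
          rw [hy0] at A2
          have : q * K * x = 0 := by linarith [A2]
          exact (mul_eq_zero.1 this).resolve_left hqK
        · refine ⟨fun hx0 => hy0 ?_, hy0⟩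
          rw [hx0] at A1
          have : q * y = 0 := by linarith [A1]
          exact (mul_eq_zero.1 this).resolve_left (ne_of_gt hq)
      have hquad : (lam * (p * K + q) - p * K) * (lam * (q * K + p) - p) = q ^ 2 * K := by
        have hprod : (lam * (p * K + q) - p * K) * (lam * (q * K + p) - p) * (x * y)
            = q ^ 2 * (K:ℝ) * (x * y) := by
          linear_combination (lam * (q * K + p) - p) * y * A1 + q * y * A2
        exact mul_right_cancel₀ (mul_ne_zero hxy.1 hxy.2) hprod
      have hfac : (lam - 1) * (lam * ((p * K + q) * (q * K + p)) - (p ^ 2 - q ^ 2) * K) = 0 := by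
        linear_combination hquad
      rcases mul_eq_zero.1 hfac with h | h
      · exact absurd (by linarith : lam = 1) hne
      · have : lam = lam2 := by
          rw [hlam2, eq_div_iff (ne_of_gt hD)]
          linarith
        exact le_of_eq this
end

section
/- In the three-block mean-field SBM with green light given only to block i at every step, if c_{1,j} > 0 for some block j ≠ i while c_{1,i} > 0, then liminf_{t→∞} ‖C_t‖₁ ≥ (N_j/(N - N_i))·c_{1,i}·N_i + c_{1,j}·N_j > 0, so the RLGL algorithm does not converge. -/
open Finset Filter Topology

/-- Three-block mean-field SBM, green light only to block `i`: if `c_{1,i} > 0` and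
`c_{1,j} > 0` for some `j ≠ i`, then
`liminf ‖C_t‖₁ ≥ (N_j/(N - N_i)) c_{1,i} N_i + c_{1,j} N_j > 0`,
so the RLGL algorithm does not converge. -/
theorem stmt15 (Nv : Fin 3 → ℝ) (hNv : ∀ k, 0 < Nv k)
    (p q : ℝ) (hq : 0 < q) (hpq : q < p)
    (i j : Fin 3) (hij : j ≠ i) (c : ℕ → Fin 3 → ℝ)
    (hbal : ∀ t ≥ 1, ∑ k, Nv k * c t k = 0)
    (hupd_i : ∀ t ≥ 1, c (t + 1) i =
      c t i * (Nv i * p / (Nv i * (p - q) + (∑ k, Nv k) * q)))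
    (hupd_j : ∀ t ≥ 1, ∀ l ≠ i, c (t + 1) l =
      c t l + c t i * (Nv i * q / (Nv i * (p - q) + (∑ k, Nv k) * q)))
    (hci : 0 < c 1 i) (hcj : 0 < c 1 j) :
    (Nv j / ((∑ k, Nv k) - Nv i)) * (c 1 i * Nv i) + c 1 j * Nv j ≤
        Filter.atTop.liminf (fun t => ∑ k, Nv k * |c t k|) ∧
      0 < (Nv j / ((∑ k, Nv k) - Nv i)) * (c 1 i * Nv i) + c 1 j * Nv j := by
  set S := ∑ k, Nv k with hS
  set D := Nv i * (p - q) + S * q with hD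
  set r := Nv i * p / D with hr
  set a := Nv i * q / D with ha
  have hSi : Nv i < S :=
    Finset.single_lt_sum hij (mem_univ i) (mem_univ j) (hNv j)
      (fun k _ _ => (hNv k).le)
  have hSsub : (0:ℝ) < S - Nv i := sub_pos.mpr hSi
  have hDpos : 0 < D := by
    rw [hD]; nlinarith [hNv i, hq, hpq, hSi]
  have hr0 : 0 ≤ r := by
    rw [hr]; exact div_nonneg (mul_nonneg (hNv i).le (by linarith)) hDpos.le
  have hr1 : r < 1 := by
    rw [hr, div_lt_one hDpos, hD]; nlinarith [hq, hSi]
  have hii : ∀ n : ℕ, c (n + 1) i = c 1 i * r ^ n := by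
    intro n
    induction n with
    | zero => simp
    | succ n ih =>
      rw [hupd_i (n + 1) (by omega), ih, pow_succ]; ring
  have hjj : ∀ l ≠ i, ∀ n : ℕ,
      c (n + 1) l = c 1 l + c 1 i * a * ∑ s ∈ range n, r ^ s := by
    intro l hl n
    induction n with
    | zero => simp
    | succ n ih =>
      rw [hupd_j (n + 1) (by omega) l hl, ih, hii n, Finset.sum_range_succ]; ring
  have hsum : Tendsto (fun n => ∑ s ∈ range n, r ^ s) atTop (𝓝 (1 - r)⁻¹) :=
    (hasSum_geometric_of_lt_one hr0 hr1).tendsto_sum_nat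
  have hL : ∀ l ≠ i, Tendsto (fun t => c t l) atTop
      (𝓝 (c 1 l + c 1 i * a * (1 - r)⁻¹)) := by
    intro l hl
    rw [← tendsto_add_atTop_iff_nat 1]
    have he : (fun n => c (n + 1) l) =
        fun n => c 1 l + c 1 i * a * ∑ s ∈ range n, r ^ s := funext (hjj l hl)
    rw [he]
    exact tendsto_const_nhds.add (hsum.const_mul _)
  have hLj := hL j hij
  have hLi : Tendsto (fun t => c t i) atTop (𝓝 0) := by
    rw [← tendsto_add_atTop_iff_nat 1]
    have he : (fun n => c (n + 1) i) = fun n => c 1 i * r ^ n := funext hii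
    rw [he]
    simpa using (tendsto_pow_atTop_nhds_zero_of_lt_one hr0 hr1).const_mul (c 1 i)
  have hLall : ∀ k : Fin 3, ∃ L, Tendsto (fun t => c t k) atTop (𝓝 L) := by
    intro k
    by_cases hk : k = i
    · exact ⟨0, hk ▸ hLi⟩
    · exact ⟨_, hL k hk⟩
  have hnorm : Tendsto (fun t => ∑ k, Nv k * |c t k|) atTop
      (𝓝 (∑ k, Nv k * |(hLall k).choose|)) :=
    tendsto_finset_sum _ fun k _ => ((hLall k).choose_spec.abs.const_mul _)
  have h1r : 1 - r = (S - Nv i) * q / D := by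
    rw [hr]
    field_simp
    rw [hD]; ring
  have hkey : c 1 i * a * (1 - r)⁻¹ = c 1 i * Nv i / (S - Nv i) := by
    rw [h1r, ha]
    field_simp
  have hT : (Nv j / (S - Nv i)) * (c 1 i * Nv i) + c 1 j * Nv j =
      Nv j * (c 1 j + c 1 i * a * (1 - r)⁻¹) := by
    rw [hkey]
    field_simp
    ring
  have hg : Tendsto (fun t => Nv j * c t j) atTop
      (𝓝 (Nv j * (c 1 j + c 1 i * a * (1 - r)⁻¹))) := hLj.const_mul _
  have hle : ∀ t, Nv j * c t j ≤ ∑ k, Nv k * |c t k| := by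
    intro t
    calc Nv j * c t j ≤ Nv j * |c t j| :=
          mul_le_mul_of_nonneg_left (le_abs_self _) (hNv j).le
      _ ≤ ∑ k, Nv k * |c t k| :=
          Finset.single_le_sum (fun k _ => mul_nonneg (hNv k).le (abs_nonneg _))
            (mem_univ j)
  constructor
  · rw [hT, ← hg.liminf_eq]
    refine Filter.liminf_le_liminf (Eventually.of_forall hle) ?_ ?_
    · exact hg.isBoundedUnder_ge
    · exact hnorm.isCoboundedUnder_ge
  · exact add_pos (mul_pos (div_pos (hNv j) hSsub) (mul_pos hci (hNv i)))
      (mul_pos hcj (hNv j))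
end

section
/- The value function of the block-scheduling Markov decision problem is symmetric: V(-c) = V(c) for every state c, and the optimal action sets coincide: A(-c) = A(c). -/
open Filter

/-- Symmetry of the value function and optimal action sets of the block-scheduling
MDP: `V(-c) = V(c)` and `A(-c) = A(c)`, where the one-step cost is zero whenever
`‖c‖₁ ≤ ε` and equals `κ(a)` otherwise, transitions are linear, and `V` is the
limit of value iteration started from `V₀ ≡ 0`. -/
theorem stmt16 {α : Type*} [Fintype α] [Nonempty α]
    (f : α → (ℝ × ℝ) →ₗ[ℝ] (ℝ × ℝ))
    (cost : α → ℝ) (hcost : ∀ a, 0 ≤ cost a)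
    (ε : ℝ) (hε : 0 < ε)
    (κ : (ℝ × ℝ) → α → ℝ)
    (hκ : ∀ c a, κ c a = if |c.1| + |c.2| ≤ ε then 0 else cost a)
    (Vn : ℕ → (ℝ × ℝ) → ℝ)
    (hV0 : Vn 0 = 0)
    (hVrec : ∀ n c, Vn (n + 1) c = ⨅ a : α, (κ c a + Vn n (f a c)))
    (V : (ℝ × ℝ) → ℝ)
    (hV : ∀ c, Tendsto (fun n => Vn n c) atTop (nhds (V c))) :
    ∀ c : ℝ × ℝ,
      V (-c) = V c ∧
      {a : α | ∀ b : α, κ c a + V (f a c) ≤ κ c b + V (f b c)} =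
        {a : α | ∀ b : α, κ (-c) a + V (f a (-c)) ≤ κ (-c) b + V (f b (-c))} := by
  have hκneg : ∀ c a, κ (-c) a = κ c a := by
    intro c a
    rw [hκ, hκ]
    simp [abs_neg]
  have hVn : ∀ n c, Vn n (-c) = Vn n c := by
    intro n
    induction n with
    | zero => intro c; simp [hV0]
    | succ n ih =>
      intro c
      rw [hVrec, hVrec]
      congr 1
      funext a
      rw [hκneg, map_neg, ih]
  have hVneg : ∀ c, V (-c) = V c := by
    intro c
    have h1 := hV (-c)
    have h2 := hV c
    simp only [hVn] at h1
    exact tendsto_nhds_unique h1 h2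
  intro c
  refine ⟨hVneg c, ?_⟩
  ext a
  simp only [Set.mem_setOf_eq, hκneg, map_neg, hVneg]
end
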